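/- Let d ≥ 1, n ≥ 2, Σ a positive definite d×d real matrix, μ, z* ∈ ℝ^d, and τ ≥ 1. Let m₀ = ((τ−1)/τ)μ̂_{τ−1} + μ/τ with covariance V₀ = Σ/(τ²n), and m₁ = ((τ−1)/τ)μ̂_{τ−1} + ((n−1)μ + z*)/(τn) with covariance V₁ = ((n−1)/n²τ²)Σ. Then the log ratio of the multivariate Gaussian density N(m₁, V₁) to N(m₀, V₀) evaluated at μ̂_τ equals −(d/2)log((n−1)/n) − (n/(2(n−1)))·Nᵀ Σ⁻¹ N + (n/(n−1))·Nᵀ Σ⁻¹ (z* − μ) − m*/(2(n−1)), where N = τ(μ̂_τ − ((τ−1)/τ)μ̂_{τ−1}) − μ and m* = (z*−μ)ᵀ Σ⁻¹ (z*−μ). -/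

import Mathlib

open Real Matrix

/-- Multivariate Gaussian density with mean `m` and covariance `V`. -/
noncomputable def mvGaussPDF {d : ℕ} (m : Fin d → ℝ) (V : Matrix (Fin d) (Fin d) ℝ)
    (x : Fin d → ℝ) : ℝ :=
  (2 * Real.pi) ^ (-(d : ℝ) / 2) * V.det ^ (-(1 : ℝ) / 2) *
    Real.exp (-((x - m) ⬝ᵥ (V⁻¹ *ᵥ (x - m))) / 2)

lemma mvGaussPDF_pos {d : ℕ} (m : Fin d → ℝ) (V : Matrix (Fin d) (Fin d) ℝ)
    (x : Fin d → ℝ) (hV : 0 < V.det) : 0 < mvGaussPDF m V x := by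
  unfold mvGaussPDF
  have h2π : (0:ℝ) < 2 * Real.pi := by positivity
  positivity

lemma log_mvGaussPDF {d : ℕ} (m : Fin d → ℝ) (V : Matrix (Fin d) (Fin d) ℝ)
    (x : Fin d → ℝ) (hV : 0 < V.det) :
    Real.log (mvGaussPDF m V x)
      = (-(d : ℝ) / 2) * Real.log (2 * Real.pi)
        + (-(1 : ℝ) / 2) * Real.log V.det
        - ((x - m) ⬝ᵥ (V⁻¹ *ᵥ (x - m))) / 2 := by
  unfold mvGaussPDF
  have h2π : (0:ℝ) < 2 * Real.pi := by positivity
  rw [Real.log_mul (by positivity) (Real.exp_ne_zero _),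
    Real.log_mul (by positivity) (by positivity),
    Real.log_rpow h2π, Real.log_rpow hV, Real.log_exp]
  ring

/-- Multivariate log likelihood ratio of SeMI* (Theorem 3.1). -/
theorem semi_star_multivariate_log_lr
    (d n τ : ℕ) (hd : 1 ≤ d) (hn : 2 ≤ n) (hτ : 1 ≤ τ)
    (Sig : Matrix (Fin d) (Fin d) ℝ) (hSig : Sig.PosDef)
    (μ zstar μhatPrev μhatτ : Fin d → ℝ)
    (m₀ m₁ N : Fin d → ℝ) (V₀ V₁ : Matrix (Fin d) (Fin d) ℝ) (mstar : ℝ)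
    (hm₀ : m₀ = (((τ : ℝ) - 1) / τ) • μhatPrev + (τ : ℝ)⁻¹ • μ)
    (hV₀ : V₀ = ((τ : ℝ) ^ 2 * n)⁻¹ • Sig)
    (hm₁ : m₁ = (((τ : ℝ) - 1) / τ) • μhatPrev
        + ((τ : ℝ) * n)⁻¹ • (((n : ℝ) - 1) • μ + zstar))
    (hV₁ : V₁ = (((n : ℝ) - 1) / ((n : ℝ) ^ 2 * (τ : ℝ) ^ 2)) • Sig)
    (hN : N = (τ : ℝ) • (μhatτ - (((τ : ℝ) - 1) / τ) • μhatPrev) - μ)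
    (hmstar : mstar = (zstar - μ) ⬝ᵥ (Sig⁻¹ *ᵥ (zstar - μ))) :
    Real.log (mvGaussPDF m₁ V₁ μhatτ / mvGaussPDF m₀ V₀ μhatτ)
      = -((d : ℝ) / 2) * Real.log (((n : ℝ) - 1) / n)
        - ((n : ℝ) / (2 * ((n : ℝ) - 1))) * (N ⬝ᵥ (Sig⁻¹ *ᵥ N))
        + ((n : ℝ) / ((n : ℝ) - 1)) * (N ⬝ᵥ (Sig⁻¹ *ᵥ (zstar - μ)))
        - mstar / (2 * ((n : ℝ) - 1)) := by
  have hτR : (1:ℝ) ≤ (τ:ℝ) := by exact_mod_cast hτ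
  have hnR : (2:ℝ) ≤ (n:ℝ) := by exact_mod_cast hn
  have hτ0 : (0:ℝ) < τ := by linarith
  have hn0 : (0:ℝ) < n := by linarith
  have hn1 : (0:ℝ) < (n:ℝ) - 1 := by linarith
  have hτne : (τ:ℝ) ≠ 0 := hτ0.ne'
  have hnne : (n:ℝ) ≠ 0 := hn0.ne'
  have hn1ne : (n:ℝ) - 1 ≠ 0 := hn1.ne'
  have hD : 0 < Sig.det := hSig.det_pos
  set c₀ : ℝ := ((τ : ℝ) ^ 2 * n)⁻¹ with hc₀
  set c₁ : ℝ := (((n : ℝ) - 1) / ((n : ℝ) ^ 2 * (τ : ℝ) ^ 2)) with hc₁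
  have hc₀pos : 0 < c₀ := by rw [hc₀]; positivity
  have hc₁pos : 0 < c₁ := by rw [hc₁]; positivity
  have hdet₀ : V₀.det = c₀ ^ d * Sig.det := by
    rw [hV₀, Matrix.det_smul, Fintype.card_fin]
  have hdet₁ : V₁.det = c₁ ^ d * Sig.det := by
    rw [hV₁, Matrix.det_smul, Fintype.card_fin]
  have hdet₀pos : 0 < V₀.det := by rw [hdet₀]; positivity
  have hdet₁pos : 0 < V₁.det := by rw [hdet₁]; positivity
  -- inverse of smul
  have hinv : ∀ c : ℝ, c ≠ 0 → (c • Sig)⁻¹ = c⁻¹ • Sig⁻¹ := by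
    intro c hc
    apply Matrix.inv_eq_left_inv
    rw [Matrix.smul_mul, Matrix.mul_smul, smul_smul, inv_mul_cancel₀ hc, one_smul,
      Matrix.nonsing_inv_mul _ (isUnit_iff_ne_zero.mpr hD.ne')]
  set S := Sig⁻¹ with hS
  set w : Fin d → ℝ := zstar - μ with hw
  set A : ℝ := N ⬝ᵥ (S *ᵥ N) with hA
  set B : ℝ := N ⬝ᵥ (S *ᵥ w) with hB
  -- symmetry of S
  have hSt : Sᵀ = S := by
    have h1 : S.IsHermitian := (hSig.isHermitian.inv)
    simpa [Matrix.IsHermitian, Matrix.conjTranspose_eq_transpose_of_trivial] using h1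
  have hsymm : w ⬝ᵥ (S *ᵥ N) = N ⬝ᵥ (S *ᵥ w) := by
    rw [Matrix.dotProduct_mulVec, ← Matrix.mulVec_transpose, hSt, dotProduct_comm]
  -- centered vectors
  have hx₀ : μhatτ - m₀ = (τ:ℝ)⁻¹ • N := by
    funext i
    simp only [hm₀, hN, Pi.sub_apply, Pi.add_apply, Pi.smul_apply, smul_eq_mul]
    field_simp
    ring
  have hx₁ : μhatτ - m₁ = ((τ:ℝ) * n)⁻¹ • ((n:ℝ) • N - w) := by
    funext i
    simp only [hm₁, hN, hw, Pi.sub_apply, Pi.add_apply, Pi.smul_apply, smul_eq_mul]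
    field_simp
    ring
  -- quadratic forms
  have hQ₀ : (μhatτ - m₀) ⬝ᵥ (V₀⁻¹ *ᵥ (μhatτ - m₀)) = (n:ℝ) * A := by
    rw [hx₀, hV₀, hinv _ hc₀pos.ne']
    simp only [Matrix.smul_mulVec, Matrix.mulVec_smul, dotProduct_smul,
      smul_dotProduct, smul_eq_mul, ← hS, ← hA]
    rw [hc₀]
    field_simp
  have hE : ((n:ℝ) • N - w) ⬝ᵥ (S *ᵥ ((n:ℝ) • N - w))
      = (n:ℝ)^2 * A - 2 * (n:ℝ) * B + mstar := by
    simp only [Matrix.mulVec_sub, Matrix.mulVec_smul, dotProduct_sub,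
      sub_dotProduct, dotProduct_smul, smul_dotProduct, smul_eq_mul]
    rw [hsymm]
    rw [hmstar]
    ring
  have hQ₁ : (μhatτ - m₁) ⬝ᵥ (V₁⁻¹ *ᵥ (μhatτ - m₁))
      = ((n:ℝ) / ((n:ℝ) - 1)) * ((n:ℝ) * A - 2 * B) + mstar / ((n:ℝ) - 1) := by
    rw [hx₁, hV₁, hinv _ hc₁pos.ne']
    simp only [Matrix.smul_mulVec, Matrix.mulVec_smul, dotProduct_smul,
      smul_dotProduct, smul_eq_mul, ← hS]
    rw [hE, hc₁]
    field_simp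
  -- log determinant difference
  have hlogdet : Real.log V₁.det - Real.log V₀.det
      = (d:ℝ) * Real.log (((n:ℝ) - 1) / n) := by
    rw [hdet₀, hdet₁, Real.log_mul (by positivity) hD.ne',
      Real.log_mul (by positivity) hD.ne',
      Real.log_pow, Real.log_pow]
    have : Real.log c₁ - Real.log c₀ = Real.log (((n:ℝ) - 1) / n) := by
      rw [← Real.log_div hc₁pos.ne' hc₀pos.ne']
      congr 1
      rw [hc₀, hc₁]
      field_simp
    push_cast
    linear_combination (d:ℝ) * this
  have hL1 : Real.log V₁.det = Real.log V₀.det + (d:ℝ) * Real.log (((n:ℝ)-1)/n) := by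
    linarith [hlogdet]
  rw [Real.log_div (mvGaussPDF_pos _ _ _ hdet₁pos).ne' (mvGaussPDF_pos _ _ _ hdet₀pos).ne',
    log_mvGaussPDF _ _ _ hdet₁pos, log_mvGaussPDF _ _ _ hdet₀pos, hQ₀, hQ₁, hL1]
  field_simp
  ring
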